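/- In the mean-field rotator model, for h ≠ 0 the free-energy function F₀(m;β,h) = β|m|²/2 − log ∫_{S¹} e^{β σ·(m+h)} α(dσ) on the closed unit disk has every global minimizer m* lying on the line ℝh through the origin spanned by h (i.e. the minimizer points in the direction of h or its opposite); in particular, any global minimizer m* satisfies m* × h = 0. -/

import Mathlib

open Real intervalIntegral

lemma rot_integral (β a b : ℝ) :
    ∫ θ in (0 : ℝ)..(2 * Real.pi),
        Real.exp (β * (Real.cos θ * a + Real.sin θ * b)) =
      ∫ θ in (0 : ℝ)..(2 * Real.pi),
        Real.exp (β * (Real.sqrt (a ^ 2 + b ^ 2) * Real.cos θ)) := by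
  by_cases hz : a = 0 ∧ b = 0
  · obtain ⟨rfl, rfl⟩ := hz
    simp
  · set z : ℂ := ⟨a, b⟩ with hzdef
    have hz0 : z ≠ 0 := by
      intro hc
      exact hz ⟨congrArg Complex.re hc, congrArg Complex.im hc⟩
    have habs : ‖z‖ ≠ 0 := norm_ne_zero_iff.mpr hz0
    set r := ‖z‖ with hr
    set φ := Complex.arg z with hφ
    have hra : r = Real.sqrt (a ^ 2 + b ^ 2) := by
      rw [hr, Complex.norm_def, Complex.normSq_apply]
      norm_num [hzdef]; ring_nf
    have hcos : r * Real.cos φ = a := by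
      rw [hφ, Complex.cos_arg hz0]
      have hre : z.re = a := rfl
      rw [hr, hre]
      field_simp
    have hsin : r * Real.sin φ = b := by
      rw [hφ, Complex.sin_arg]
      have him : z.im = b := rfl
      rw [hr, him]
      field_simp
    have key : ∀ θ : ℝ, β * (Real.cos θ * a + Real.sin θ * b)
        = β * (r * Real.cos (θ - φ)) := by
      intro θ
      rw [Real.cos_sub, ← hcos, ← hsin]; ring
    simp_rw [key, hra.symm]
    have := intervalIntegral.integral_comp_sub_right
      (fun θ => Real.exp (β * (r * Real.cos θ))) φ (a := 0) (b := 2 * Real.pi)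
    rw [this, show (0:ℝ) - φ = -φ by ring, show 2*Real.pi - φ = -φ + 2*Real.pi by ring]
    have hper : Function.Periodic (fun θ => Real.exp (β * (r * Real.cos θ))) (2 * Real.pi) := by
      intro x; simp [Real.cos_add_two_pi]
    have h2 := hper.intervalIntegral_add_eq (-φ) 0
    simpa using h2
/-- for the mean-field rotator model with external field h ≠ 0, every global
minimizer m* of F₀(m;β,h) = β|m|²/2 − log ∫_{S¹} e^{βσ·(m+h)} α(dσ) on the closed unit
disk lies on the line ℝh: m* × h = 0. -/
theorem meanfield_rotator_minimizer_on_field_line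
    (β : ℝ) (hβ : 0 < β) (h : ℝ × ℝ) (hh : h ≠ 0)
    (F₀ : ℝ × ℝ → ℝ)
    (hF : ∀ m : ℝ × ℝ, F₀ m =
      β * (m.1 ^ 2 + m.2 ^ 2) / 2 -
        Real.log ((2 * Real.pi)⁻¹ * ∫ θ in (0 : ℝ)..(2 * Real.pi),
          Real.exp (β * (Real.cos θ * (m.1 + h.1) + Real.sin θ * (m.2 + h.2))))) :
    ∀ m : ℝ × ℝ, m.1 ^ 2 + m.2 ^ 2 ≤ 1 →
      (∀ m' : ℝ × ℝ, m'.1 ^ 2 + m'.2 ^ 2 ≤ 1 → F₀ m ≤ F₀ m') →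
      m.1 * h.2 - m.2 * h.1 = 0 := by
  intro m hm hmin
  by_contra hc
  set r : ℝ := Real.sqrt ((m.1 + h.1) ^ 2 + (m.2 + h.2) ^ 2) with hrdef
  set t : ℝ := Real.sqrt (h.1 ^ 2 + h.2 ^ 2) with htdef
  have hr0 : 0 ≤ r := Real.sqrt_nonneg _
  have ht0 : 0 ≤ t := Real.sqrt_nonneg _
  have hr2 : r ^ 2 = (m.1 + h.1) ^ 2 + (m.2 + h.2) ^ 2 :=
    Real.sq_sqrt (by positivity)
  have hhsq : 0 < h.1 ^ 2 + h.2 ^ 2 := by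
    rcases (Prod.mk.injEq _ _ _ _ ▸ (by exact fun hc' => hh (Prod.ext hc'.1 hc'.2) :
        ¬(h.1 = 0 ∧ h.2 = 0))) with _
    by_contra hle
    push_neg at hle
    have h1 : h.1 = 0 := by nlinarith [sq_nonneg h.1, sq_nonneg h.2]
    have h2 : h.2 = 0 := by nlinarith [sq_nonneg h.1, sq_nonneg h.2]
    exact hh (Prod.ext h1 h2)
  have ht2 : t ^ 2 = h.1 ^ 2 + h.2 ^ 2 := Real.sq_sqrt (le_of_lt hhsq)
  have htpos : 0 < t := Real.sqrt_pos.mpr hhsq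
  set ip : ℝ := (m.1 + h.1) * h.1 + (m.2 + h.2) * h.2 with hipdef
  -- strict Cauchy-Schwarz via Lagrange identity
  have hcp : ip < r * t := by
    have hcross : (m.1 + h.1) * h.2 - (m.2 + h.2) * h.1 = m.1 * h.2 - m.2 * h.1 := by ring
    have hc2 : 0 < (m.1 * h.2 - m.2 * h.1) ^ 2 := by positivity
    have hlag : (r * t) ^ 2 = ip ^ 2 + (m.1 * h.2 - m.2 * h.1) ^ 2 := by
      have : (r * t) ^ 2 = r ^ 2 * t ^ 2 := by ring
      rw [this, hr2, ht2]; ring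
    nlinarith [mul_nonneg hr0 ht0, sq_nonneg (ip - r * t), sq_nonneg (ip + r * t)]
  set m' : ℝ × ℝ := ((r / t) * h.1 - h.1, (r / t) * h.2 - h.2) with hm'def
  clear_value m'
  have hmsq : m.1 ^ 2 + m.2 ^ 2 = r ^ 2 - 2 * ip + t ^ 2 := by
    rw [hr2, ht2, hipdef]; ring
  have hm'sq : m'.1 ^ 2 + m'.2 ^ 2 = (r - t) ^ 2 := by
    have : m'.1 ^ 2 + m'.2 ^ 2 = (r / t - 1) ^ 2 * (h.1 ^ 2 + h.2 ^ 2) := by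
      simp only [hm'def]; ring
    rw [this, ← ht2]
    field_simp
  have hlt : m'.1 ^ 2 + m'.2 ^ 2 < m.1 ^ 2 + m.2 ^ 2 := by
    rw [hm'sq, hmsq]; nlinarith
  have hm'disk : m'.1 ^ 2 + m'.2 ^ 2 ≤ 1 := le_of_lt (lt_of_lt_of_le hlt hm)
  -- the integrals agree
  have hint : (∫ θ in (0 : ℝ)..(2 * Real.pi),
        Real.exp (β * (Real.cos θ * (m.1 + h.1) + Real.sin θ * (m.2 + h.2)))) =
      ∫ θ in (0 : ℝ)..(2 * Real.pi),
        Real.exp (β * (Real.cos θ * (m'.1 + h.1) + Real.sin θ * (m'.2 + h.2))) := by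
    rw [rot_integral, rot_integral]
    have e1 : (m'.1 + h.1) ^ 2 + (m'.2 + h.2) ^ 2 = r ^ 2 := by
      have : (m'.1 + h.1) ^ 2 + (m'.2 + h.2) ^ 2 = (r / t) ^ 2 * (h.1 ^ 2 + h.2 ^ 2) := by
        simp only [hm'def]; ring
      rw [this, ← ht2]
      field_simp
    rw [e1, ← hrdef, Real.sqrt_sq hr0, hrdef]
  have hF' : F₀ m' < F₀ m := by
    rw [hF m, hF m', hint]
    have h2 := mul_lt_mul_of_pos_left hlt hβ
    exact sub_lt_sub_right (by linarith) _
  exact absurd (hmin m' hm'disk) (not_le.mpr hF')
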